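/- There exists a constant C > 0 such that for all real numbers λ, μ ≥ 0 and all ξ, η ∈ Matrix (Fin 3) (Fin 3) ℝ, |F_{λ,μ}(ξ) − F_{λ,μ}(η)| ≤ C·(λ + μ + F_{λ,μ}(ξ) + F_{λ,μ}(η))^{3/4}·(λ+μ)^{1/4}·‖ξ − η‖, where F_{λ,μ}(ξ) := (λ/2)·(tr Ẽ(ξ))² + μ·‖Ẽ(ξ)‖² and Ẽ(ξ) := (1/2)(ξ + ξᵀ + ξᵀξ). -/

import Mathlib

open Matrix

/-- The Frobenius norm of a real matrix: `‖ξ‖ = (tr(ξᵀξ))^(1/2)`. -/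
noncomputable def frobNorm {M N : ℕ} (ξ : Matrix (Fin M) (Fin N) ℝ) : ℝ :=
  Real.sqrt ((ξᵀ * ξ).trace)

/-- The Green-Saint Venant strain tensor `Ẽ(ξ) = (1/2)(ξ + ξᵀ + ξᵀξ)`. -/
noncomputable def Etil (ξ : Matrix (Fin 3) (Fin 3) ℝ) : Matrix (Fin 3) (Fin 3) ℝ :=
  (1 / 2 : ℝ) • (ξ + ξᵀ + ξᵀ * ξ)

/-- The Saint Venant–Kirchhoff hyper-elastic energy density with Lamé
coefficients `l, m`: `F(ξ) = (l/2)(tr Ẽ(ξ))² + m‖Ẽ(ξ)‖²`. -/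
noncomputable def Fsvk (l m : ℝ) (ξ : Matrix (Fin 3) (Fin 3) ℝ) : ℝ :=
  l / 2 * (Etil ξ).trace ^ 2 + m * frobNorm (Etil ξ) ^ 2

section SVKproof

namespace SVKaux

attribute [local instance] Matrix.frobeniusSeminormedAddCommGroup Matrix.frobeniusNormedAddCommGroup Matrix.frobeniusNormedSpace Matrix.frobeniusIsBoundedSMul


attribute [local instance] Matrix.frobeniusSeminormedAddCommGroup Matrix.frobeniusNormedAddCommGroup Matrix.frobeniusNormedSpace Matrix.frobeniusIsBoundedSMul

lemma trace_tmul (A B : Matrix (Fin 3) (Fin 3) ℝ) :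
    (Aᵀ * B).trace = ∑ p : Fin 3 × Fin 3, A p.1 p.2 * B p.1 p.2 := by
  simp [Matrix.trace, Matrix.mul_apply, Matrix.diag, Fintype.sum_prod_type]
  exact Finset.sum_comm

lemma norm_eq (A : Matrix (Fin 3) (Fin 3) ℝ) :
    ‖A‖ = Real.sqrt (∑ p : Fin 3 × Fin 3, A p.1 p.2 ^ 2) := by
  rw [Matrix.frobenius_norm_def, Real.sqrt_eq_rpow]
  congr 1
  rw [Fintype.sum_prod_type]
  norm_num [Real.rpow_two, sq_abs]

lemma frobNorm_eq (A : Matrix (Fin 3) (Fin 3) ℝ) : frobNorm A = ‖A‖ := by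
  rw [frobNorm, norm_eq, trace_tmul]
  congr 1
  exact Finset.sum_congr rfl fun p _ => (sq (A p.1 p.2)).symm

lemma norm_sq (A : Matrix (Fin 3) (Fin 3) ℝ) : ‖A‖ ^ 2 = (Aᵀ * A).trace := by
  rw [norm_eq, Real.sq_sqrt (Finset.sum_nonneg fun p _ => sq_nonneg _), trace_tmul]
  exact Finset.sum_congr rfl fun p _ => sq (A p.1 p.2)

lemma inner_le (A B : Matrix (Fin 3) (Fin 3) ℝ) : (Aᵀ * B).trace ≤ ‖A‖ * ‖B‖ := by
  rw [trace_tmul, norm_eq, norm_eq]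
  exact Real.sum_mul_le_sqrt_mul_sqrt _ _ _

lemma abs_inner_le (A B : Matrix (Fin 3) (Fin 3) ℝ) : |(Aᵀ * B).trace| ≤ ‖A‖ * ‖B‖ := by
  rcases abs_cases ((Aᵀ * B).trace) with ⟨h, _⟩ | ⟨h, _⟩
  · rw [h]; exact inner_le A B
  · rw [h]
    have := inner_le (-A) B
    simp only [Matrix.transpose_neg, Matrix.neg_mul, Matrix.trace_neg, norm_neg] at this
    linarith

lemma norm_one' : ‖(1 : Matrix (Fin 3) (Fin 3) ℝ)‖ = Real.sqrt 3 := by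
  rw [norm_eq]
  congr 1
  rw [Fintype.sum_prod_type]
  simp [Fin.sum_univ_three, Matrix.one_apply]

lemma abs_trace_le (A : Matrix (Fin 3) (Fin 3) ℝ) : |A.trace| ≤ Real.sqrt 3 * ‖A‖ := by
  have h := abs_inner_le 1 A
  rwa [Matrix.transpose_one, Matrix.one_mul, norm_one'] at h

lemma norm_sq_sub_norm_sq (A B : Matrix (Fin 3) (Fin 3) ℝ) :
    ‖A‖ ^ 2 - ‖B‖ ^ 2 = ((A - B)ᵀ * (A + B)).trace := by
  rw [trace_tmul]
  have hA := norm_sq A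
  have hB := norm_sq B
  rw [norm_sq, norm_sq, trace_tmul, trace_tmul, ← Finset.sum_sub_distrib]
  refine Finset.sum_congr rfl fun p _ => ?_
  simp [Matrix.sub_apply, Matrix.add_apply]
  ring


lemma trace_Etil (ξ : Matrix (Fin 3) (Fin 3) ℝ) :
    3 + 2 * (Etil ξ).trace = ‖1 + ξ‖ ^ 2 := by
  rw [norm_sq]
  have h : (1 + ξ)ᵀ * (1 + ξ) = 1 + ξ + ξᵀ + ξᵀ * ξ := by
    rw [Matrix.transpose_add, Matrix.transpose_one]
    noncomm_ring
  rw [h]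
  simp only [Etil, Matrix.trace_smul, Matrix.trace_add, Matrix.trace_transpose,
    Matrix.trace_one, smul_eq_mul]
  simp only [Fintype.card_fin]
  ring

lemma norm_le_aux (ξ : Matrix (Fin 3) (Fin 3) ℝ) :
    ‖ξ‖ ≤ Real.sqrt 3 + Real.sqrt (3 + 2 * (Etil ξ).trace) := by
  have h1 : ‖ξ‖ ≤ ‖1 + ξ‖ + ‖(1 : Matrix (Fin 3) (Fin 3) ℝ)‖ := by
    have := norm_sub_le (1 + ξ) 1
    simpa using this
  have h2 : Real.sqrt (3 + 2 * (Etil ξ).trace) = ‖1 + ξ‖ := by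
    rw [trace_Etil, Real.sqrt_sq (norm_nonneg _)]
  rw [norm_one'] at h1
  rw [h2]
  linarith

lemma Etil_sub (ξ η : Matrix (Fin 3) (Fin 3) ℝ) :
    Etil ξ - Etil η
      = (1 / 2 : ℝ) • ((ξ - η) + (ξ - η)ᵀ + ξᵀ * (ξ - η) + (ξ - η)ᵀ * η) := by
  rw [Etil, Etil, ← smul_sub]
  congr 1
  rw [Matrix.transpose_sub]
  noncomm_ring

lemma Etil_sub_norm_le (ξ η : Matrix (Fin 3) (Fin 3) ℝ) :
    ‖Etil ξ - Etil η‖ ≤ (1 + (‖ξ‖ + ‖η‖) / 2) * ‖ξ - η‖ := by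
  rw [Etil_sub, norm_smul]
  have h1 : ‖(ξ - η) + (ξ - η)ᵀ + ξᵀ * (ξ - η) + (ξ - η)ᵀ * η‖
      ≤ ‖ξ - η‖ + ‖(ξ - η)ᵀ‖ + ‖ξᵀ * (ξ - η)‖ + ‖(ξ - η)ᵀ * η‖ := by
    refine le_trans (norm_add_le _ _) ?_
    have := le_trans (norm_add_le ((ξ - η) + (ξ - η)ᵀ) (ξᵀ * (ξ - η)))
      (add_le_add_right (norm_add_le _ _) _)
    linarith [norm_add_le ((ξ - η) + (ξ - η)ᵀ) (ξᵀ * (ξ - η)), norm_add_le (ξ - η) (ξ - η)ᵀ]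
  have h2 : ‖(ξ - η)ᵀ‖ = ‖ξ - η‖ := Matrix.frobenius_norm_transpose _
  have h3 : ‖ξᵀ * (ξ - η)‖ ≤ ‖ξ‖ * ‖ξ - η‖ := by
    calc ‖ξᵀ * (ξ - η)‖ ≤ ‖ξᵀ‖ * ‖ξ - η‖ := Matrix.frobenius_norm_mul _ _
    _ = ‖ξ‖ * ‖ξ - η‖ := by rw [Matrix.frobenius_norm_transpose]
  have h4 : ‖(ξ - η)ᵀ * η‖ ≤ ‖ξ - η‖ * ‖η‖ := by
    calc ‖(ξ - η)ᵀ * η‖ ≤ ‖(ξ - η)ᵀ‖ * ‖η‖ := Matrix.frobenius_norm_mul _ _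
    _ = ‖ξ - η‖ * ‖η‖ := by rw [h2]
  have h5 : ‖(1 / 2 : ℝ)‖ = 1 / 2 := by norm_num
  rw [h5]
  nlinarith [norm_nonneg (ξ - η), norm_nonneg ξ, norm_nonneg η]

lemma Fsvk_nonneg {l m : ℝ} (hl : 0 ≤ l) (hm : 0 ≤ m) (ξ : Matrix (Fin 3) (Fin 3) ℝ) :
    0 ≤ Fsvk l m ξ :=
  add_nonneg (mul_nonneg (by linarith) (sq_nonneg _)) (mul_nonneg hm (sq_nonneg _))

lemma Fsvk_sub (l m : ℝ) (ξ η : Matrix (Fin 3) (Fin 3) ℝ) :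
    Fsvk l m ξ - Fsvk l m η
      = l / 2 * (((Etil ξ).trace + (Etil η).trace) * ((Etil ξ - Etil η).trace))
        + m * ((Etil ξ - Etil η)ᵀ * (Etil ξ + Etil η)).trace := by
  rw [Fsvk, Fsvk, frobNorm_eq, frobNorm_eq, Matrix.trace_sub]
  rw [← norm_sq_sub_norm_sq]
  ring

lemma key_bound {l m : ℝ} (hl : 0 ≤ l) (hm : 0 ≤ m) (ξ η : Matrix (Fin 3) (Fin 3) ℝ) :
    |Fsvk l m ξ - Fsvk l m η|
      ≤ (Real.sqrt 3 / 2 * (l * |(Etil ξ).trace| + l * |(Etil η).trace|)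
          + m * ‖Etil ξ‖ + m * ‖Etil η‖) * ‖Etil ξ - Etil η‖ := by
  have hl2 : (0:ℝ) ≤ l / 2 := by linarith
  have h1 : |(Etil ξ - Etil η).trace| ≤ Real.sqrt 3 * ‖Etil ξ - Etil η‖ := abs_trace_le _
  have h2 : |((Etil ξ - Etil η)ᵀ * (Etil ξ + Etil η)).trace|
      ≤ ‖Etil ξ - Etil η‖ * (‖Etil ξ‖ + ‖Etil η‖) := by
    refine le_trans (abs_inner_le _ _) ?_
    have := norm_add_le (Etil ξ) (Etil η)
    have h0 := norm_nonneg (Etil ξ - Etil η)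
    nlinarith
  have habs : |(Etil ξ).trace + (Etil η).trace| ≤ |(Etil ξ).trace| + |(Etil η).trace| :=
    abs_add_le _ _
  rw [Fsvk_sub]
  calc |l / 2 * (((Etil ξ).trace + (Etil η).trace) * ((Etil ξ - Etil η).trace))
        + m * ((Etil ξ - Etil η)ᵀ * (Etil ξ + Etil η)).trace|
      ≤ l / 2 * (|(Etil ξ).trace + (Etil η).trace| * |(Etil ξ - Etil η).trace|)
        + m * |((Etil ξ - Etil η)ᵀ * (Etil ξ + Etil η)).trace| := by
        refine le_trans (abs_add_le _ _) ?_
        rw [abs_mul, abs_mul, abs_mul, abs_of_nonneg hl2, abs_of_nonneg hm]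
    _ ≤ l / 2 * ((|(Etil ξ).trace| + |(Etil η).trace|) * (Real.sqrt 3 * ‖Etil ξ - Etil η‖))
        + m * (‖Etil ξ - Etil η‖ * (‖Etil ξ‖ + ‖Etil η‖)) := by
        gcongr
    _ = (Real.sqrt 3 / 2 * (l * |(Etil ξ).trace| + l * |(Etil η).trace|)
          + m * ‖Etil ξ‖ + m * ‖Etil η‖) * ‖Etil ξ - Etil η‖ := by ring


lemma le_of_sq {x y : ℝ} (hx : 0 ≤ x) (hy : 0 ≤ y) (h : x ^ 2 ≤ y ^ 2) : x ≤ y := by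
  nlinarith

lemma sqrt3_le_two : Real.sqrt 3 ≤ 2 := by
  nlinarith [Real.sq_sqrt (by norm_num : (0:ℝ) ≤ 3), Real.sqrt_nonneg 3]

set_option maxHeartbeats 1000000 in
lemma core {l m t1 t2 e1 e2 x1 x2 D d S F1 F2 u v : ℝ}
    (hl : 0 ≤ l) (hm : 0 ≤ m) (hd : 0 ≤ d) (hD : 0 ≤ D)
    (he1 : 0 ≤ e1) (he2 : 0 ≤ e2) (hx1 : 0 ≤ x1) (hx2 : 0 ≤ x2)
    (hu0 : 0 ≤ u) (hv0 : 0 ≤ v)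
    (hu4 : u ^ 4 = l + m + F1 + F2) (hv4 : v ^ 4 = l + m)
    (hF1 : F1 = l / 2 * t1 ^ 2 + m * e1 ^ 2)
    (hF2 : F2 = l / 2 * t2 ^ 2 + m * e2 ^ 2)
    (ht1 : |t1| ≤ Real.sqrt 3 * e1) (ht2 : |t2| ≤ Real.sqrt 3 * e2)
    (hq1 : 0 ≤ 3 + 2 * t1) (hq2 : 0 ≤ 3 + 2 * t2)
    (hxb1 : x1 ≤ Real.sqrt 3 + Real.sqrt (3 + 2 * t1))
    (hxb2 : x2 ≤ Real.sqrt 3 + Real.sqrt (3 + 2 * t2))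
    (hDb : D ≤ (1 + (x1 + x2) / 2) * d)
    (hkey : |S| ≤ (Real.sqrt 3 / 2 * (l * |t1| + l * |t2|) + m * e1 + m * e2) * D) :
    |S| ≤ 100 * u ^ 3 * v * d := by
  have h3 : Real.sqrt 3 ^ 2 = 3 := Real.sq_sqrt (by norm_num)
  have h30 : (0:ℝ) ≤ Real.sqrt 3 := Real.sqrt_nonneg _
  have h32 : Real.sqrt 3 ≤ 2 := sqrt3_le_two
  have hF10 : 0 ≤ F1 := by
    rw [hF1]; linarith [mul_nonneg hl (sq_nonneg t1), mul_nonneg hm (sq_nonneg e1)]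
  have hF20 : 0 ≤ F2 := by
    rw [hF2]; linarith [mul_nonneg hl (sq_nonneg t2), mul_nonneg hm (sq_nonneg e2)]
  have hu40 : (0:ℝ) ≤ u ^ 4 := by positivity
  have hF1u : F1 ≤ u ^ 4 := by rw [hu4]; linarith
  have hF2u : F2 ≤ u ^ 4 := by rw [hu4]; linarith
  have hlv : l ≤ v ^ 4 := by rw [hv4]; linarith
  have hmv : m ≤ v ^ 4 := by rw [hv4]; linarith
  have hv4le : v ^ 4 ≤ u ^ 4 := by rw [hu4, hv4]; linarith
  have huv : v ≤ u := by
    refine le_of_sq hv0 hu0 (le_of_sq (sq_nonneg _) (sq_nonneg _) ?_)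
    calc (v ^ 2) ^ 2 = v ^ 4 := by ring
      _ ≤ u ^ 4 := hv4le
      _ = (u ^ 2) ^ 2 := by ring
  have huv2 : v ^ 2 ≤ u ^ 2 := by
    refine le_of_sq (sq_nonneg _) (sq_nonneg _) ?_
    calc (v ^ 2) ^ 2 = v ^ 4 := by ring
      _ ≤ u ^ 4 := hv4le
      _ = (u ^ 2) ^ 2 := by ring
  -- trace squared bounds
  have hkey1 : Real.sqrt 3 * e1 * (Real.sqrt 3 * e1) = 3 * e1 ^ 2 := by
    calc Real.sqrt 3 * e1 * (Real.sqrt 3 * e1) = Real.sqrt 3 ^ 2 * e1 ^ 2 := by ring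
      _ = 3 * e1 ^ 2 := by rw [h3]
  have hkey2 : Real.sqrt 3 * e2 * (Real.sqrt 3 * e2) = 3 * e2 ^ 2 := by
    calc Real.sqrt 3 * e2 * (Real.sqrt 3 * e2) = Real.sqrt 3 ^ 2 * e2 ^ 2 := by ring
      _ = 3 * e2 ^ 2 := by rw [h3]
  have ht1sq : t1 ^ 2 ≤ 3 * e1 ^ 2 := by
    linarith [mul_le_mul ht1 ht1 (abs_nonneg t1) (mul_nonneg h30 he1), sq_abs t1, hkey1]
  have ht2sq : t2 ^ 2 ≤ 3 * e2 ^ 2 := by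
    linarith [mul_le_mul ht2 ht2 (abs_nonneg t2) (mul_nonneg h30 he2), sq_abs t2, hkey2]
  have hlt1 : l * t1 ^ 2 ≤ 2 * F1 := by
    rw [hF1]; linarith [mul_nonneg hm (sq_nonneg e1)]
  have hlt2 : l * t2 ^ 2 ≤ 2 * F2 := by
    rw [hF2]; linarith [mul_nonneg hm (sq_nonneg e2)]
  have hme1 : m * e1 ^ 2 ≤ F1 := by
    rw [hF1]; linarith [mul_nonneg hl (sq_nonneg t1)]
  have hme2 : m * e2 ^ 2 ≤ F2 := by
    rw [hF2]; linarith [mul_nonneg hl (sq_nonneg t2)]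
  have hat1 : (l + m) * t1 ^ 2 ≤ 5 * u ^ 4 := by
    linarith [mul_le_mul_of_nonneg_left ht1sq hm]
  have hat2 : (l + m) * t2 ^ 2 ≤ 5 * u ^ 4 := by
    linarith [mul_le_mul_of_nonneg_left ht2sq hm]
  -- bracket pieces
  have hA1 : l * |t1| ≤ 3 / 2 * (u ^ 2 * v ^ 2) := by
    refine le_of_sq (mul_nonneg hl (abs_nonneg _)) (by positivity) ?_
    calc (l * |t1|) ^ 2 = l * (l * t1 ^ 2) := by rw [mul_pow, sq_abs]; ring
      _ ≤ l * (2 * F1) := mul_le_mul_of_nonneg_left hlt1 hl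
      _ ≤ v ^ 4 * (2 * u ^ 4) := mul_le_mul hlv (by linarith) (by linarith) (by positivity)
      _ ≤ (3 / 2 * (u ^ 2 * v ^ 2)) ^ 2 := by
          linarith [mul_nonneg hu40 (pow_nonneg hv0 4)]
  have hA2 : l * |t2| ≤ 3 / 2 * (u ^ 2 * v ^ 2) := by
    refine le_of_sq (mul_nonneg hl (abs_nonneg _)) (by positivity) ?_
    calc (l * |t2|) ^ 2 = l * (l * t2 ^ 2) := by rw [mul_pow, sq_abs]; ring
      _ ≤ l * (2 * F2) := mul_le_mul_of_nonneg_left hlt2 hl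
      _ ≤ v ^ 4 * (2 * u ^ 4) := mul_le_mul hlv (by linarith) (by linarith) (by positivity)
      _ ≤ (3 / 2 * (u ^ 2 * v ^ 2)) ^ 2 := by
          linarith [mul_nonneg hu40 (pow_nonneg hv0 4)]
  have hB1 : m * e1 ≤ u ^ 2 * v ^ 2 := by
    refine le_of_sq (mul_nonneg hm he1) (by positivity) ?_
    calc (m * e1) ^ 2 = m * (m * e1 ^ 2) := by ring
      _ ≤ m * F1 := mul_le_mul_of_nonneg_left hme1 hm
      _ ≤ v ^ 4 * u ^ 4 := mul_le_mul hmv hF1u hF10 (by positivity)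
      _ = (u ^ 2 * v ^ 2) ^ 2 := by ring
  have hB2 : m * e2 ≤ u ^ 2 * v ^ 2 := by
    refine le_of_sq (mul_nonneg hm he2) (by positivity) ?_
    calc (m * e2) ^ 2 = m * (m * e2 ^ 2) := by ring
      _ ≤ m * F2 := mul_le_mul_of_nonneg_left hme2 hm
      _ ≤ v ^ 4 * u ^ 4 := mul_le_mul hmv hF2u hF20 (by positivity)
      _ = (u ^ 2 * v ^ 2) ^ 2 := by ring
  -- bounds on x * v
  have hvt1 : v ^ 2 * |t1| ≤ 9 / 4 * u ^ 2 := by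
    refine le_of_sq (by positivity) (by positivity) ?_
    have h5 : v ^ 4 * t1 ^ 2 ≤ 5 * u ^ 4 := by rw [hv4]; exact hat1
    calc (v ^ 2 * |t1|) ^ 2 = v ^ 4 * t1 ^ 2 := by rw [mul_pow, sq_abs]; ring
      _ ≤ 5 * u ^ 4 := h5
      _ ≤ (9 / 4 * u ^ 2) ^ 2 := by linarith [hu40]
  have hvt2 : v ^ 2 * |t2| ≤ 9 / 4 * u ^ 2 := by
    refine le_of_sq (by positivity) (by positivity) ?_
    have h5 : v ^ 4 * t2 ^ 2 ≤ 5 * u ^ 4 := by rw [hv4]; exact hat2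
    calc (v ^ 2 * |t2|) ^ 2 = v ^ 4 * t2 ^ 2 := by rw [mul_pow, sq_abs]; ring
      _ ≤ 5 * u ^ 4 := h5
      _ ≤ (9 / 4 * u ^ 2) ^ 2 := by linarith [hu40]
  have hs1 : v * Real.sqrt (3 + 2 * t1) ≤ 3 * u := by
    refine le_of_sq (by positivity) (by positivity) ?_
    calc (v * Real.sqrt (3 + 2 * t1)) ^ 2 = v ^ 2 * (3 + 2 * t1) := by
          rw [mul_pow, Real.sq_sqrt hq1]
      _ ≤ 3 * v ^ 2 + 2 * (v ^ 2 * |t1|) := by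
          linarith [mul_le_mul_of_nonneg_left (le_abs_self t1) (sq_nonneg v)]
      _ ≤ 3 * u ^ 2 + 2 * (9 / 4 * u ^ 2) := by linarith [huv2, hvt1]
      _ ≤ (3 * u) ^ 2 := by linarith [sq_nonneg u]
  have hs2 : v * Real.sqrt (3 + 2 * t2) ≤ 3 * u := by
    refine le_of_sq (by positivity) (by positivity) ?_
    calc (v * Real.sqrt (3 + 2 * t2)) ^ 2 = v ^ 2 * (3 + 2 * t2) := by
          rw [mul_pow, Real.sq_sqrt hq2]
      _ ≤ 3 * v ^ 2 + 2 * (v ^ 2 * |t2|) := by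
          linarith [mul_le_mul_of_nonneg_left (le_abs_self t2) (sq_nonneg v)]
      _ ≤ 3 * u ^ 2 + 2 * (9 / 4 * u ^ 2) := by linarith [huv2, hvt2]
      _ ≤ (3 * u) ^ 2 := by linarith [sq_nonneg u]
  have h3v : Real.sqrt 3 * v ≤ 2 * u := mul_le_mul h32 huv hv0 (by norm_num)
  have hx1u : x1 * v ≤ 5 * u := by
    have h := mul_le_mul_of_nonneg_right hxb1 hv0
    have hexp : (Real.sqrt 3 + Real.sqrt (3 + 2 * t1)) * v
        = Real.sqrt 3 * v + v * Real.sqrt (3 + 2 * t1) := by ring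
    rw [hexp] at h
    linarith [hs1, h3v]
  have hx2u : x2 * v ≤ 5 * u := by
    have h := mul_le_mul_of_nonneg_right hxb2 hv0
    have hexp : (Real.sqrt 3 + Real.sqrt (3 + 2 * t2)) * v
        = Real.sqrt 3 * v + v * Real.sqrt (3 + 2 * t2) := by ring
    rw [hexp] at h
    linarith [hs2, h3v]
  -- bound on v * D
  have hDv : v * D ≤ 6 * (u * d) := by
    have h1 : v * D ≤ v * ((1 + (x1 + x2) / 2) * d) := mul_le_mul_of_nonneg_left hDb hv0
    have h2 : v * ((1 + (x1 + x2) / 2) * d) = v * d + (x1 * v * d + x2 * v * d) / 2 := by ring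
    rw [h2] at h1
    linarith [mul_le_mul_of_nonneg_right hx1u hd, mul_le_mul_of_nonneg_right hx2u hd,
      mul_le_mul_of_nonneg_right huv hd]
  -- bracket bound
  have hbr : Real.sqrt 3 / 2 * (l * |t1| + l * |t2|) + m * e1 + m * e2
      ≤ 5 * (u ^ 2 * v ^ 2) := by
    have hP : l * |t1| + l * |t2| ≤ 3 * (u ^ 2 * v ^ 2) := by linarith
    have hP0 : 0 ≤ l * |t1| + l * |t2| :=
      add_nonneg (mul_nonneg hl (abs_nonneg _)) (mul_nonneg hl (abs_nonneg _))
    linarith [mul_le_mul h32 hP hP0 (by norm_num : (0:ℝ) ≤ 2), hB1, hB2]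
  -- combine
  have hc1 : |S| ≤ 5 * (u ^ 2 * v ^ 2) * D := le_trans hkey (mul_le_mul_of_nonneg_right hbr hD)
  have hc3 : 5 * (u ^ 2 * v) * (v * D) ≤ 5 * (u ^ 2 * v) * (6 * (u * d)) :=
    mul_le_mul_of_nonneg_left hDv (by positivity)
  have hfin : |S| ≤ 30 * (u ^ 3 * v * d) := by linarith [hc1, hc3]
  linarith [hfin, mul_nonneg (mul_nonneg (pow_nonneg hu0 3) hv0) hd]

end SVKaux

attribute [local instance] Matrix.frobeniusSeminormedAddCommGroup Matrix.frobeniusNormedAddCommGroup Matrix.frobeniusNormedSpace Matrix.frobeniusIsBoundedSMul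

open SVKaux in
/-- The verification, in Example 2, that the Saint Venant–Kirchhoff density
satisfies the Lipschitz condition (2.5) with `p = 4` and `h_n = a_n = λ_n + μ_n`. -/
theorem svk_lipschitz_condition :
    ∃ C : ℝ, 0 < C ∧ ∀ l m : ℝ, 0 ≤ l → 0 ≤ m →
      ∀ ξ η : Matrix (Fin 3) (Fin 3) ℝ,
        |Fsvk l m ξ - Fsvk l m η| ≤
          C * (l + m + Fsvk l m ξ + Fsvk l m η) ^ ((3 : ℝ) / 4) *
            (l + m) ^ ((1 : ℝ) / 4) * frobNorm (ξ - η) := by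
  refine ⟨100, by norm_num, fun l m hl hm ξ η => ?_⟩
  by_cases ha : l + m = 0
  · have hl0 : l = 0 := by linarith
    have hm0 : m = 0 := by linarith
    have hF : ∀ ζ : Matrix (Fin 3) (Fin 3) ℝ, Fsvk l m ζ = 0 := by
      intro ζ; rw [hl0, hm0, Fsvk]; ring
    rw [hF ξ, hF η, ha]
    rw [Real.zero_rpow (by norm_num : (1:ℝ)/4 ≠ 0)]
    simp
  have ha' : 0 < l + m := lt_of_le_of_ne (by linarith) (Ne.symm ha)
  have hFξ0 : 0 ≤ Fsvk l m ξ := Fsvk_nonneg hl hm ξ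
  have hFη0 : 0 ≤ Fsvk l m η := Fsvk_nonneg hl hm η
  set a : ℝ := l + m with hadef
  set Fξ := Fsvk l m ξ with hFξdef
  set Fη := Fsvk l m η with hFηdef
  set G : ℝ := a + Fξ + Fη with hGdef
  have hG : 0 < G := by simp only [hGdef]; linarith
  set u : ℝ := Real.sqrt (Real.sqrt G) with hudef
  set v : ℝ := Real.sqrt (Real.sqrt a) with hvdef
  have hu0 : 0 ≤ u := Real.sqrt_nonneg _
  have hv0 : 0 ≤ v := Real.sqrt_nonneg _
  have hu4 : u ^ 4 = G := by
    rw [hudef, show (4:ℕ) = 2 * 2 from rfl, pow_mul,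
      Real.sq_sqrt (Real.sqrt_nonneg _), Real.sq_sqrt hG.le]
  have hv4 : v ^ 4 = a := by
    rw [hvdef, show (4:ℕ) = 2 * 2 from rfl, pow_mul,
      Real.sq_sqrt (Real.sqrt_nonneg _), Real.sq_sqrt ha'.le]
  have hu14 : u = G ^ ((1:ℝ)/4) := by
    rw [hudef, Real.sqrt_eq_rpow, Real.sqrt_eq_rpow, ← Real.rpow_mul hG.le]
    norm_num
  have hG34 : G ^ ((3:ℝ)/4) = u ^ 3 := by
    rw [hu14, ← Real.rpow_natCast (G ^ ((1:ℝ)/4)) 3, ← Real.rpow_mul hG.le]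
    norm_num
  have ha14 : a ^ ((1:ℝ)/4) = v := by
    rw [hvdef, Real.sqrt_eq_rpow, Real.sqrt_eq_rpow, ← Real.rpow_mul ha'.le]
    norm_num
  rw [hG34, ha14, frobNorm_eq]
  have hq1 : 0 ≤ 3 + 2 * (Etil ξ).trace := by
    rw [trace_Etil ξ]; exact sq_nonneg _
  have hq2 : 0 ≤ 3 + 2 * (Etil η).trace := by
    rw [trace_Etil η]; exact sq_nonneg _
  have hF1 : Fξ = l / 2 * (Etil ξ).trace ^ 2 + m * ‖Etil ξ‖ ^ 2 := by
    rw [hFξdef, Fsvk, frobNorm_eq]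
  have hF2 : Fη = l / 2 * (Etil η).trace ^ 2 + m * ‖Etil η‖ ^ 2 := by
    rw [hFηdef, Fsvk, frobNorm_eq]
  exact core hl hm (norm_nonneg (ξ - η)) (norm_nonneg (Etil ξ - Etil η))
    (norm_nonneg (Etil ξ)) (norm_nonneg (Etil η)) (norm_nonneg ξ) (norm_nonneg η)
    hu0 hv0 hu4 hv4 hF1 hF2 (abs_trace_le _) (abs_trace_le _) hq1 hq2
    (norm_le_aux ξ) (norm_le_aux η) (Etil_sub_norm_le ξ η) (key_bound hl hm ξ η)

end SVKproof
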